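/- Define the coefficients η_1 = (W^{ub}(2)-W^{ub}(1)-W(2)+W(1))/(W^{ub}(2)-W^{ub}(1)-W^{lb}(2)+W^{lb}(1)), η_j = (W^{ub}(j+1)-W^{ub}(j)-W(j+1)+W(j))/(W^{ub}(j+1)-W^{ub}(j)-W^{lb}(j+1)+W^{lb}(j)) - Σ_{k<j} η_k for 2 ≤ j ≤ n-1, and η_n = 1 - Σ_{k<n} η_k. Under the sandwich conditions (i) and (ii) of Corollary 3 (with W(1)=1 normalization), each η_j ≥ 0. -/

import Mathlib

theorem generalized_coefficients_nonneg
    (n : ℕ) (hn : 2 ≤ n)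
    (W Wub Wlb : ℕ → ℝ)
    (hnorm1 : W 1 = Wub 1) (hnorm2 : W 1 = Wlb 1) (hW1 : W 1 = 1)
    (hi : ∀ x, 1 ≤ x → x ≤ n - 1 →
      Wlb (x + 1) - Wlb x ≤ W (x + 1) - W x ∧
      W (x + 1) - W x ≤ Wub (x + 1) - Wub x)
    (hii : ∀ x, 2 ≤ x → x ≤ n - 1 →
      W (x + 1) - 2 * W x + W (x - 1) ≤
        Wub (x + 1) - 2 * Wub x + Wub (x - 1) ∧
      Wub (x + 1) - 2 * Wub x + Wub (x - 1) ≤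
        Wlb (x + 1) - 2 * Wlb x + Wlb (x - 1))
    (hden : ∀ j, 1 ≤ j → j ≤ n - 1 →
      0 < Wub (j + 1) - Wub j - Wlb (j + 1) + Wlb j)
    (η : ℕ → ℝ)
    (hη1 : η 1 = (Wub 2 - Wub 1 - W 2 + W 1) / (Wub 2 - Wub 1 - Wlb 2 + Wlb 1))
    (hηj : ∀ j, 2 ≤ j → j ≤ n - 1 →
      η j = (Wub (j + 1) - Wub j - W (j + 1) + W j) /
              (Wub (j + 1) - Wub j - Wlb (j + 1) + Wlb j)
            - ∑ k ∈ Finset.Icc 1 (j - 1), η k)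
    (hηn : η n = 1 - ∑ k ∈ Finset.Icc 1 (n - 1), η k) :
    ∀ j ∈ Finset.Icc 1 n, 0 ≤ η j := by
  -- partial sums equal the ratio
  have key : ∀ j, 1 ≤ j → j ≤ n - 1 → ∑ k ∈ Finset.Icc 1 j, η k =
      (Wub (j + 1) - Wub j - W (j + 1) + W j) /
        (Wub (j + 1) - Wub j - Wlb (j + 1) + Wlb j) := by
    intro j hj1 hjn
    rcases eq_or_lt_of_le hj1 with h1 | h2
    · subst h1
      rw [Finset.Icc_self, Finset.sum_singleton, hη1]
    · obtain ⟨m, rfl⟩ : ∃ m, j = m + 1 := ⟨j - 1, by omega⟩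
      rw [Finset.sum_Icc_succ_top (by omega : 1 ≤ m + 1),
        hηj (m + 1) (by omega) hjn]
      simp [Nat.add_sub_cancel]
  intro j hj
  simp only [Finset.mem_Icc] at hj
  obtain ⟨hj1, hjn⟩ := hj
  by_cases hje : j = n
  · -- last coefficient
    rw [hje]
    have h1 : (1 : ℕ) ≤ n - 1 := by omega
    have hk := key (n - 1) h1 le_rfl
    have hsucc : n - 1 + 1 = n := by omega
    rw [hsucc] at hk
    rw [hηn, hk]
    have hd := hden (n - 1) h1 le_rfl
    rw [hsucc] at hd
    have hA := (hi (n - 1) h1 le_rfl).1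
    rw [hsucc] at hA
    have hle : (Wub n - Wub (n - 1) - W n + W (n - 1)) /
        (Wub n - Wub (n - 1) - Wlb n + Wlb (n - 1)) ≤ 1 := by
      rw [div_le_one hd]; linarith
    linarith
  · have hjn' : j ≤ n - 1 := by omega
    rcases eq_or_lt_of_le hj1 with h1 | h2
    · -- j = 1
      subst h1
      rw [hη1]
      have hd := hden 1 le_rfl (by omega)
      have hA := (hi 1 le_rfl (by omega)).2
      norm_num at hd hA ⊢
      exact div_nonneg (by linarith) (by linarith)
    · -- 2 ≤ j ≤ n - 1
      have hj2 : 2 ≤ j := h2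
      rw [hηj j hj2 hjn', key (j - 1) (by omega) (by omega)]
      have hsucc : j - 1 + 1 = j := by omega
      rw [hsucc]
      have hdj := hden j (by omega) hjn'
      have hdj1 := hden (j - 1) (by omega) (by omega)
      rw [hsucc] at hdj1
      have hAj1 := (hi (j - 1) (by omega) (by omega))
      rw [hsucc] at hAj1
      have hAj := (hi j (by omega) hjn')
      have hiij := hii j hj2 hjn'
      -- A_{j-1} ≤ A_j and B_j ≤ B_{j-1}
      have hAmono : Wub j - Wub (j - 1) - W j + W (j - 1) ≤
          Wub (j + 1) - Wub j - W (j + 1) + W j := by linarith [hiij.1]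
      have hBmono : Wub (j + 1) - Wub j - Wlb (j + 1) + Wlb j ≤
          Wub j - Wub (j - 1) - Wlb j + Wlb (j - 1) := by linarith [hiij.2]
      have hAnn : 0 ≤ Wub j - Wub (j - 1) - W j + W (j - 1) := by
        linarith [hAj1.2]
      have := div_le_div₀ (by linarith [hAj.2] :
          (0:ℝ) ≤ Wub (j + 1) - Wub j - W (j + 1) + W j) hAmono hdj hBmono
      linarith
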